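/- If $\rho(\mathfrak{P},L) = R$ for a full-rank lattice $L\subset\mathbb{R}^k$ and $R > 0$, then there exist $\boldsymbol{\zeta}\in\mathbb{R}^k$ and a nonempty set $E \subset \{\pm 1\}^k$ such that: (i) $L \cap (\boldsymbol{\zeta}+R\mathfrak{P}^\circ) = \emptyset$; (ii) $L \cap (\boldsymbol{\zeta}+R\mathfrak{P}_{\boldsymbol{\epsilon}}) \neq \emptyset$ for each $\boldsymbol{\epsilon}\in E$; (iii) no $\boldsymbol{\alpha}\in\mathbb{R}^k$ satisfies $\boldsymbol{\epsilon}\cdot\boldsymbol{\alpha} < 0$ for all $\boldsymbol{\epsilon}\in E$. -/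

import Mathlib

open Submodule

private lemma crc_l1_nonneg (k : ℕ) (x : Fin k → ℝ) : 0 ≤ ∑ j, |x j| :=
  Finset.sum_nonneg fun _ _ => abs_nonneg _

private lemma crc_sgn_sum (k : ℕ) (w : Fin k → ℝ) :
    (∑ j, (if 0 ≤ w j then (1:ℝ) else -1) * w j) = ∑ j, |w j| := by
  refine Finset.sum_congr rfl fun j _ => ?_
  by_cases h : 0 ≤ w j
  · simp [h, abs_of_nonneg h]
  · simp [h, abs_of_neg (lt_of_not_ge h)]

private lemma crc_sum_eps_le (k : ℕ) (ε x : Fin k → ℝ) (hε : ∀ j, ε j = 1 ∨ ε j = -1) :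
    (∑ j, ε j * x j) ≤ ∑ j, |x j| := by
  refine Finset.sum_le_sum fun j _ => ?_
  rcases hε j with h | h <;> rw [h]
  · simpa using le_abs_self (x j)
  · simpa using neg_le_abs (x j)

private lemma crc_norm_le (k : ℕ) (x : Fin k → ℝ) : ‖x‖ ≤ ∑ j, |x j| := by
  refine (pi_norm_le_iff_of_nonneg (crc_l1_nonneg k x)).mpr fun i => ?_
  rw [Real.norm_eq_abs]
  exact Finset.single_le_sum (f := fun j => |x j|) (fun j _ => abs_nonneg _) (Finset.mem_univ i)

private lemma crc_finite (k : ℕ) (B : Module.Basis (Fin k) ℝ (Fin k → ℝ)) (x : Fin k → ℝ) (c : ℝ) :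
    {v : Fin k → ℝ | v ∈ span ℤ (Set.range ⇑B) ∧ (∑ j, |v j - x j|) ≤ c}.Finite := by
  have hd : DiscreteTopology ((span ℤ (Set.range ⇑B) : Set (Fin k → ℝ))) :=
    inferInstanceAs (DiscreteTopology (span ℤ (Set.range ⇑B)))
  have hD : DiscreteTopology (span ℤ (Set.range ⇑B)).toAddSubgroup :=
    inferInstanceAs (DiscreteTopology (span ℤ (Set.range ⇑B)))
  have hcl : IsClosed ((span ℤ (Set.range ⇑B) : Set (Fin k → ℝ))) :=
    AddSubgroup.isClosed_of_discrete (H := (span ℤ (Set.range ⇑B)).toAddSubgroup)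
  refine Set.Finite.subset
    (Metric.finite_isBounded_inter_isClosed (K := Metric.closedBall x c)
      (isDiscrete_iff_discreteTopology.mpr hd) Metric.isBounded_closedBall hcl) ?_
  rintro v ⟨hv, hvc⟩
  refine ⟨?_, hv⟩
  rw [Metric.mem_closedBall, dist_eq_norm]
  refine le_trans ?_ hvc
  refine le_trans (crc_norm_le k (v - x)) (le_of_eq ?_)
  exact Finset.sum_congr rfl fun j _ => rfl

section Main

variable (k : ℕ) (B : Module.Basis (Fin k) ℝ (Fin k → ℝ))

noncomputable def crcD (x : Fin k → ℝ) : ℝ :=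
  sInf ((fun v => ∑ j, |v j - x j|) '' (span ℤ (Set.range ⇑B) : Set (Fin k → ℝ)))

lemma crcD_ne (x : Fin k → ℝ) :
    ((fun v => ∑ j, |v j - x j|) '' (span ℤ (Set.range ⇑B) : Set (Fin k → ℝ))).Nonempty :=
  ⟨∑ j, |(0:Fin k → ℝ) j - x j|, 0, zero_mem _, rfl⟩

lemma crcD_bdd (x : Fin k → ℝ) :
    BddBelow ((fun v => ∑ j, |v j - x j|) '' (span ℤ (Set.range ⇑B) : Set (Fin k → ℝ))) := by
  refine ⟨0, ?_⟩
  rintro t ⟨v, hv, rfl⟩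
  exact crc_l1_nonneg k _

lemma crcD_le (x : Fin k → ℝ) {v : Fin k → ℝ} (hv : v ∈ span ℤ (Set.range ⇑B)) :
    crcD k B x ≤ ∑ j, |v j - x j| :=
  csInf_le (crcD_bdd k B x) ⟨v, hv, rfl⟩

lemma le_crcD (x : Fin k → ℝ) {c : ℝ}
    (h : ∀ v ∈ span ℤ (Set.range ⇑B), c ≤ ∑ j, |v j - x j|) : c ≤ crcD k B x := by
  refine le_csInf (crcD_ne k B x) ?_
  rintro t ⟨v, hv, rfl⟩
  exact h v hv

lemma crcD_nonneg (x : Fin k → ℝ) : 0 ≤ crcD k B x :=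
  le_crcD k B x fun v _ => crc_l1_nonneg k _

lemma crcD_exists_lt (x : Fin k → ℝ) {c : ℝ} (h : crcD k B x < c) :
    ∃ v ∈ span ℤ (Set.range ⇑B), (∑ j, |v j - x j|) < c := by
  obtain ⟨t, ⟨v, hv, rfl⟩, ht⟩ := exists_lt_of_csInf_lt (crcD_ne k B x) h
  exact ⟨v, hv, ht⟩

lemma crcD_add_le (x : Fin k → ℝ) {w : Fin k → ℝ} (hw : w ∈ span ℤ (Set.range ⇑B)) :
    crcD k B (x + w) ≤ crcD k B x := by
  refine le_crcD k B x fun v hv => ?_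
  calc crcD k B (x + w) ≤ ∑ j, |(v + w) j - (x + w) j| := crcD_le k B _ (add_mem hv hw)
  _ = ∑ j, |v j - x j| := by
      refine Finset.sum_congr rfl fun j _ => ?_
      simp [add_sub_add_right_eq_sub]

lemma crcD_add (x : Fin k → ℝ) {w : Fin k → ℝ} (hw : w ∈ span ℤ (Set.range ⇑B)) :
    crcD k B (x + w) = crcD k B x := by
  refine le_antisymm (crcD_add_le k B x hw) ?_
  have := crcD_add_le k B (x + w) (neg_mem hw)
  simpa using this

lemma crcD_lip (x y : Fin k → ℝ) : crcD k B x ≤ crcD k B y + ∑ j, |y j - x j| := by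
  have : crcD k B x - (∑ j, |y j - x j|) ≤ crcD k B y := by
    refine le_crcD k B y fun v hv => ?_
    have h1 : crcD k B x ≤ ∑ j, |v j - x j| := crcD_le k B x hv
    have h2 : (∑ j, |v j - x j|) ≤ (∑ j, |v j - y j|) + ∑ j, |y j - x j| := by
      rw [← Finset.sum_add_distrib]
      refine Finset.sum_le_sum fun j _ => ?_
      have := abs_add_le (v j - y j) (y j - x j)
      simpa using this
    linarith
  linarith

lemma crcD_cont : Continuous (crcD k B) := by
  have H : LipschitzWith (k : NNReal) (crcD k B) := by
    refine LipschitzWith.of_dist_le_mul fun x y => ?_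
    have hxy : (∑ j, |y j - x j|) ≤ (k : ℝ) * dist x y := by
      have : ∀ j, |y j - x j| ≤ dist x y := by
        intro j
        rw [dist_comm, dist_eq_norm]
        calc |y j - x j| = ‖(y - x) j‖ := by simp [Real.norm_eq_abs]
        _ ≤ ‖y - x‖ := norm_le_pi_norm _ j
      calc (∑ j, |y j - x j|) ≤ ∑ _j : Fin k, dist x y := Finset.sum_le_sum fun j _ => this j
      _ = (k : ℝ) * dist x y := by simp [Finset.sum_const, mul_comm]
    have hyx : (∑ j, |x j - y j|) ≤ (k : ℝ) * dist x y := by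
      have : (∑ j, |x j - y j|) = ∑ j, |y j - x j| := by
        refine Finset.sum_congr rfl fun j _ => (abs_sub_comm _ _)
      rw [this]; exact hxy
    rw [Real.dist_eq, abs_sub_le_iff]
    simp only [NNReal.coe_natCast]
    constructor
    · have := crcD_lip k B x y; linarith
    · have := crcD_lip k B y x; linarith
  exact H.continuous

end Main


/-- If the covering radius of the cross-polytope `𝔓` with respect to a full-rank lattice
`L ⊂ ℝ^k` equals `R > 0`, then there are `ζ ∈ ℝ^k` and a nonempty set `E` of sign vectors
`ε ∈ {±1}^k` such that (i) `L` misses the open set `ζ + R𝔓°`; (ii) `L` meets each face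
`ζ + R𝔓_ε`, `ε ∈ E`; (iii) no `α ∈ ℝ^k` satisfies `ε·α < 0` for all `ε ∈ E`. -/
theorem covering_radius_crosspolytope_criterion
    (k : ℕ) (B : Module.Basis (Fin k) ℝ (Fin k → ℝ)) (R : ℝ) (hR : 0 < R)
    (hρ : sInf {r : ℝ | 0 < r ∧ ∀ x : Fin k → ℝ, ∃ p : Fin k → ℝ,
        (∑ i, |p i|) ≤ 1 ∧ ∃ v ∈ Submodule.span ℤ (Set.range ⇑B), x = r • p + v} = R) :
    ∃ (ζ : Fin k → ℝ) (E : Set (Fin k → ℝ)),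
      E.Nonempty ∧ (∀ ε ∈ E, ∀ j, ε j = 1 ∨ ε j = -1) ∧
      (∀ v ∈ Submodule.span ℤ (Set.range ⇑B), ¬ (∑ j, |v j - ζ j|) < R) ∧
      (∀ ε ∈ E, ∃ v ∈ Submodule.span ℤ (Set.range ⇑B),
        (∑ j, |v j - ζ j|) ≤ R ∧ (∑ j, ε j * (v j - ζ j)) = R) ∧
      ¬ ∃ α : Fin k → ℝ, ∀ ε ∈ E, (∑ j, ε j * α j) < 0 := by
  classical
  set S := {r : ℝ | 0 < r ∧ ∀ x : Fin k → ℝ, ∃ p : Fin k → ℝ,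
      (∑ i, |p i|) ≤ 1 ∧ ∃ v ∈ Submodule.span ℤ (Set.range ⇑B), x = r • p + v} with hSdef
  have hSne : S.Nonempty := by
    by_contra h
    rw [Set.not_nonempty_iff_eq_empty] at h
    rw [h, Real.sInf_empty] at hρ
    linarith
  have hSbdd : BddBelow S := ⟨0, fun t ht => le_of_lt ht.1⟩
  -- Step A : the covering distance function is everywhere ≤ R
  have hA : ∀ x, crcD k B x ≤ R := by
    intro x
    rw [← hρ]
    refine le_csInf hSne ?_
    rintro r ⟨hr0, hr⟩
    obtain ⟨p, hp, v, hv, hx⟩ := hr x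
    refine le_trans (crcD_le k B x hv) ?_
    have hcoord : ∀ j, |v j - x j| = r * |p j| := by
      intro j
      have : v j - x j = -(r * p j) := by rw [hx]; simp [Pi.add_apply]
      rw [this, abs_neg, abs_mul, abs_of_pos hr0]
    calc (∑ j, |v j - x j|) = ∑ j, r * |p j| := Finset.sum_congr rfl fun j _ => hcoord j
    _ = r * ∑ j, |p j| := by rw [Finset.mul_sum]
    _ ≤ r * 1 := mul_le_mul_of_nonneg_left hp hr0.le
    _ = r := mul_one r
  -- Step B : existence of a deep hole
  have hdeep : ∃ ζ, R ≤ crcD k B ζ := by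
    by_contra h
    push_neg at h
    have hKc : IsCompact (closure (ZSpan.fundamentalDomain B)) :=
      (ZSpan.fundamentalDomain_isBounded B).isCompact_closure
    have hKne : (closure (ZSpan.fundamentalDomain B)).Nonempty :=
      ⟨_, subset_closure (ZSpan.fract_mem_fundamentalDomain B 0)⟩
    obtain ⟨x₀, hx₀, hmax⟩ := hKc.exists_isMaxOn hKne ((crcD_cont k B).continuousOn)
    set M := crcD k B x₀ with hM
    have hMR : M < R := h x₀
    have hM0 : 0 ≤ M := crcD_nonneg k B x₀
    set r := (M + R) / 2 with hr
    have hr0 : 0 < r := by rw [hr]; linarith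
    have hrS : r ∈ S := by
      refine ⟨hr0, fun x => ?_⟩
      have hxd : crcD k B x < r := by
        have h2 : ZSpan.fract B x + (ZSpan.floor B x : Fin k → ℝ) = x := by
          rw [ZSpan.fract_apply]; ring
        have h1 : crcD k B x = crcD k B (ZSpan.fract B x) := by
          calc crcD k B x
              = crcD k B (ZSpan.fract B x + (ZSpan.floor B x : Fin k → ℝ)) := by rw [h2]
          _ = crcD k B (ZSpan.fract B x) := crcD_add k B _ (SetLike.coe_mem _)
        have h3 : crcD k B (ZSpan.fract B x) ≤ M :=
          isMaxOn_iff.mp hmax _ (subset_closure (ZSpan.fract_mem_fundamentalDomain B x))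
        rw [hr]; linarith
      obtain ⟨v, hv, hvlt⟩ := crcD_exists_lt k B x hxd
      refine ⟨r⁻¹ • (x - v), ?_, v, hv, ?_⟩
      · have hcoord : ∀ j, |(r⁻¹ • (x - v)) j| = r⁻¹ * |x j - v j| := by
          intro j
          simp [Pi.smul_apply, smul_eq_mul, abs_mul, abs_of_pos (inv_pos.mpr hr0)]
        have hsum : (∑ j, |(r⁻¹ • (x - v)) j|) = r⁻¹ * ∑ j, |x j - v j| := by
          rw [Finset.mul_sum]; exact Finset.sum_congr rfl fun j _ => hcoord j
        have hxv : (∑ j, |x j - v j|) = ∑ j, |v j - x j| :=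
          Finset.sum_congr rfl fun j _ => abs_sub_comm _ _
        rw [hsum, hxv]
        rw [inv_mul_le_iff₀ hr0, mul_one]
        exact hvlt.le
      · rw [smul_inv_smul₀ (ne_of_gt hr0)]; ring
    have : R ≤ r := by rw [← hρ]; exact csInf_le hSbdd hrS
    rw [hr] at this; linarith
  obtain ⟨ζ, hζ⟩ := hdeep
  have hζR : crcD k B ζ = R := le_antisymm (hA ζ) hζ
  have hmiss : ∀ v ∈ Submodule.span ℤ (Set.range ⇑B), R ≤ ∑ j, |v j - ζ j| := by
    intro v hv
    rw [← hζR]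
    exact crcD_le k B ζ hv
  -- attainment of the covering radius at the deep hole
  set F := {v : Fin k → ℝ | v ∈ Submodule.span ℤ (Set.range ⇑B) ∧ (∑ j, |v j - ζ j|) ≤ R + 1}
    with hFdef
  have hFfin : F.Finite := crc_finite k B ζ (R + 1)
  obtain ⟨v₁, hv₁, hv₁lt⟩ := crcD_exists_lt k B ζ (by rw [hζR]; linarith : crcD k B ζ < R + 1)
  have hFne : F.Nonempty := ⟨v₁, hv₁, hv₁lt.le⟩
  obtain ⟨v₀, hv₀F, hv₀min⟩ := Set.exists_min_image F (fun v => ∑ j, |v j - ζ j|) hFfin hFne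
  obtain ⟨hv₀L, hv₀le⟩ := hv₀F
  have hv₀ : (∑ j, |v₀ j - ζ j|) = R := by
    refine le_antisymm ?_ (hmiss v₀ hv₀L)
    rw [← hζR]
    refine le_crcD k B ζ fun v hv => ?_
    rcases le_or_gt (∑ j, |v j - ζ j|) (R + 1) with hc | hc
    · exact hv₀min v ⟨hv, hc⟩
    · have := hv₀min v₁ ⟨hv₁, hv₁lt.le⟩
      linarith
  -- the set of sign vectors of faces meeting the lattice
  set E := {ε : Fin k → ℝ | (∀ j, ε j = 1 ∨ ε j = -1) ∧
      ∃ v ∈ Submodule.span ℤ (Set.range ⇑B),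
        (∑ j, |v j - ζ j|) ≤ R ∧ (∑ j, ε j * (v j - ζ j)) = R} with hEdef
  have hsgn_mem : ∀ v ∈ Submodule.span ℤ (Set.range ⇑B), (∑ j, |v j - ζ j|) = R →
      (fun j => if 0 ≤ v j - ζ j then (1:ℝ) else -1) ∈ E := by
    intro v hv hvR
    refine ⟨fun j => ?_, v, hv, hvR.le, ?_⟩
    · by_cases h : 0 ≤ v j - ζ j <;> simp [h]
    · rw [← hvR]
      exact crc_sgn_sum k (fun j => v j - ζ j)
  refine ⟨ζ, E, ?_, ?_, ?_, ?_, ?_⟩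
  · exact ⟨_, hsgn_mem v₀ hv₀L hv₀⟩
  · rintro ε ⟨h1, -⟩; exact h1
  · intro v hv
    exact not_lt.mpr (hmiss v hv)
  · rintro ε ⟨-, h2⟩; exact h2
  -- part (iii)
  rintro ⟨α, hα⟩
  set N := ∑ j, |α j| with hN
  have hN0 : 0 ≤ N := crc_l1_nonneg k α
  -- a uniform gap δ for lattice points strictly outside the ball of radius R
  set Fgt := {v : Fin k → ℝ | (v ∈ Submodule.span ℤ (Set.range ⇑B) ∧
      (∑ j, |v j - ζ j|) ≤ R + 1) ∧ R < ∑ j, |v j - ζ j|} with hFgtdef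
  have hFgtfin : Fgt.Finite := hFfin.subset fun v hv => hv.1
  have hδ : ∃ δ > 0, ∀ v ∈ Fgt, R + δ ≤ ∑ j, |v j - ζ j| := by
    rcases Set.eq_empty_or_nonempty Fgt with hemp | hne
    · exact ⟨1, one_pos, fun v hv => absurd (hemp ▸ hv) (Set.notMem_empty v)⟩
    · obtain ⟨vm, hvm, hvmmin⟩ :=
        Set.exists_min_image Fgt (fun v => ∑ j, |v j - ζ j|) hFgtfin hne
      refine ⟨(∑ j, |vm j - ζ j|) - R, by simpa using hvm.2, fun v hv => ?_⟩
      have := hvmmin v hv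
      linarith
  obtain ⟨δ, hδ0, hδge⟩ := hδ
  -- a uniform gap for the faces
  set Feq := {v : Fin k → ℝ | v ∈ Submodule.span ℤ (Set.range ⇑B) ∧
      (∑ j, |v j - ζ j|) = R} with hFeqdef
  have hFeqfin : Feq.Finite := hFfin.subset fun v hv => ⟨hv.1, by rw [hv.2]; linarith⟩
  have hFeqne : Feq.Nonempty := ⟨v₀, hv₀L, hv₀⟩
  obtain ⟨vc, hvc, hvcmin⟩ := Set.exists_min_image Feq
    (fun v => -(∑ j, (if 0 ≤ v j - ζ j then (1:ℝ) else -1) * α j)) hFeqfin hFeqne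
  set c₀ := -(∑ j, (if 0 ≤ vc j - ζ j then (1:ℝ) else -1) * α j) with hc₀def
  have hc₀ : 0 < c₀ := by
    have hmem : (fun j => if 0 ≤ vc j - ζ j then (1:ℝ) else -1) ∈ E :=
      hsgn_mem vc hvc.1 hvc.2
    have := hα _ hmem
    rw [hc₀def]
    linarith
  -- choice of the step size t
  set t := min 1 δ / (2 * (N + 1)) with ht
  have hmin0 : 0 < min 1 δ := lt_min one_pos hδ0
  have ht0 : 0 < t := by rw [ht]; positivity
  have htN : t * N ≤ min 1 δ / 2 := by
    rw [ht, div_mul_eq_mul_div, div_le_div_iff₀ (by positivity) (by norm_num)]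
    nlinarith [hmin0.le, hN0]
  have htN1 : t * N ≤ 1 / 2 := le_trans htN (by
    have : min 1 δ ≤ 1 := min_le_left _ _
    linarith)
  have htNδ : t * N ≤ δ / 2 := le_trans htN (by
    have : min 1 δ ≤ δ := min_le_right _ _
    linarith)
  -- the margin
  set m := min (min (1/2) (δ/2)) (t * c₀) with hm
  have hm0 : 0 < m := lt_min (lt_min (by norm_num) (by linarith)) (by positivity)
  -- every lattice point is at distance ≥ R + m from ζ + t • α
  have hkey : R + m ≤ crcD k B (ζ + t • α) := by
    refine le_crcD k B _ fun v hv => ?_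
    have htα : (∑ j, |t * α j|) = t * N := by
      rw [hN, Finset.mul_sum]
      exact Finset.sum_congr rfl fun j _ => by rw [abs_mul, abs_of_pos ht0]
    have hsplit : ∀ j, v j - (ζ + t • α) j = (v j - ζ j) - t * α j := by
      intro j; simp [Pi.add_apply, Pi.smul_apply, smul_eq_mul]; ring
    have htri : (∑ j, |v j - ζ j|) - t * N ≤ ∑ j, |v j - (ζ + t • α) j| := by
      have h1 : (∑ j, |v j - ζ j|) ≤ (∑ j, |v j - (ζ + t • α) j|) + ∑ j, |t * α j| := by
        rw [← Finset.sum_add_distrib]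
        refine Finset.sum_le_sum fun j _ => ?_
        have := abs_add_le (v j - (ζ + t • α) j) (t * α j)
        rw [hsplit j] at this ⊢
        calc |v j - ζ j| = |v j - ζ j - t * α j + t * α j| := by ring_nf
        _ ≤ |v j - ζ j - t * α j| + |t * α j| := abs_add_le _ _
      rw [htα] at h1
      linarith
    rcases le_or_gt (∑ j, |v j - ζ j|) (R + 1) with hball | hball
    · rcases eq_or_lt_of_le (hmiss v hv) with heq | hlt
      · -- v is on a face
        set ε := fun j => if 0 ≤ v j - ζ j then (1:ℝ) else -1 with hε
        have hεone : ∀ j, ε j = 1 ∨ ε j = -1 := fun j => by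
          simp only [hε]
          by_cases h : 0 ≤ v j - ζ j
          · exact Or.inl (if_pos h)
          · exact Or.inr (if_neg h)
        have hεR : (∑ j, ε j * (v j - ζ j)) = R := by
          rw [hε]
          calc (∑ j, (if 0 ≤ v j - ζ j then (1:ℝ) else -1) * (v j - ζ j))
              = ∑ j, |v j - ζ j| := crc_sgn_sum k (fun j => v j - ζ j)
          _ = R := heq.symm
        have hεα : c₀ ≤ -(∑ j, ε j * α j) := by
          have := hvcmin v ⟨hv, heq.symm⟩
          simpa [hc₀def, hε] using this
        have hlow : R + t * c₀ ≤ ∑ j, |v j - (ζ + t • α) j| := by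
          have h1 : (∑ j, ε j * (v j - (ζ + t • α) j)) ≤ ∑ j, |v j - (ζ + t • α) j| :=
            crc_sum_eps_le k ε _ hεone
          have h2 : (∑ j, ε j * (v j - (ζ + t • α) j))
              = (∑ j, ε j * (v j - ζ j)) - t * ∑ j, ε j * α j := by
            rw [Finset.mul_sum, ← Finset.sum_sub_distrib]
            refine Finset.sum_congr rfl fun j _ => ?_
            rw [hsplit j]; ring
          rw [h2, hεR] at h1
          nlinarith [ht0]
        have : m ≤ t * c₀ := min_le_right _ _
        linarith
      · -- v is in the annulus
        have hvgt : v ∈ Fgt := ⟨⟨hv, hball⟩, hlt⟩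
        have := hδge v hvgt
        have hmδ : m ≤ δ / 2 := le_trans (min_le_left _ _) (min_le_right _ _)
        linarith
    · -- v is far away
      have hm1 : m ≤ 1 / 2 := le_trans (min_le_left _ _) (min_le_left _ _)
      linarith
  have := hA (ζ + t • α)
  linarith
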